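/- Let V be a real vector space with a Lorentzian form ℓ, C one of the two closed convex cones {v : ℓ(v,v) ≥ 0} ∩ (half-space), and Γ a group acting freely and properly on V by affine transformations whose linear parts preserve ℓ and C. Then the quotient V/Γ admits no nontrivial closed timelike curve if and only if for every v ∈ V and every γ ∈ Γ with γ ≠ e, one has ℓ(γ(v) − v, γ(v) − v) < 0. -/

import Mathlib

/-- A symmetric bilinear form of Lorentzian signature `(+,−,…,−)`:
there is an orthogonal basis with one vector of square `1` and all others of square `-1`. -/
def IsLorentzian {V : Type*} [AddCommGroup V] [Module ℝ V]
    (ℓ : V →ₗ[ℝ] V →ₗ[ℝ] ℝ) : Prop :=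
  (∀ u w : V, ℓ u w = ℓ w u) ∧
  ∃ (n : ℕ) (e : Module.Basis (Fin (n + 1)) ℝ V),
    (∀ i j, i ≠ j → ℓ (e i) (e j) = 0) ∧ ℓ (e 0) (e 0) = 1 ∧
    ∀ i, i ≠ 0 → ℓ (e i) (e i) = -1

/-- Lemma 3.1 (mcaus): for a group `Γ` of affine transformations of Minkowski space
whose linear parts preserve the Lorentzian form `ℓ` and one of the two closed convex
round cones `C`, acting freely, the quotient `V/Γ` is causal (equivalently, `γ v ∈ v + C`
implies `γ = 1`) if and only if `ℓ(γ v − v, γ v − v) < 0` for all `v` and all `γ ≠ 1`. -/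
theorem causal_iff_neg_displacement
    {V : Type*} [AddCommGroup V] [Module ℝ V]
    (ℓ : V →ₗ[ℝ] V →ₗ[ℝ] ℝ) (hL : IsLorentzian ℓ)
    (C : Set V)
    (hCcone : ∀ (t : ℝ) (v : V), 0 ≤ t → v ∈ C → t • v ∈ C)
    (hCconv : Convex ℝ C)
    (hCunion : C ∪ (-C) = {v : V | 0 ≤ ℓ v v})
    (hCpointed : C ∩ (-C) = {(0 : V)})
    (Γ : Subgroup (V ≃ᵃ[ℝ] V))
    (hpres : ∀ γ ∈ Γ, ∀ u w : V, ℓ (γ.linear u) (γ.linear w) = ℓ u w)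
    (hCinv : ∀ γ ∈ Γ, γ.linear '' C = C)
    (hfree : ∀ γ ∈ Γ, γ ≠ 1 → ∀ v : V, γ v ≠ v) :
    (∀ v : V, ∀ γ ∈ Γ, γ v - v ∈ C → γ = 1) ↔
      (∀ v : V, ∀ γ ∈ Γ, γ ≠ 1 → ℓ (γ v - v) (γ v - v) < 0) := by
  constructor
  · intro hcaus v γ hγ hne
    by_contra h
    push_neg at h
    have hmem : γ v - v ∈ C ∪ (-C) := by rw [hCunion]; exact h
    rcases hmem with hmem | hmem
    · exact hne (hcaus v γ hγ hmem)
    · have h2 : γ⁻¹ (γ v) - γ v ∈ C := by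
        have : (γ⁻¹ : V ≃ᵃ[ℝ] V) (γ v) = v := γ.symm_apply_apply v
        rw [this]
        simpa using hmem
      have := hcaus (γ v) γ⁻¹ (inv_mem hγ) h2
      exact hne (by simpa using congrArg (·⁻¹) this)
  · intro hneg v γ hγ hmem
    by_contra hne
    have h1 := hneg v γ hγ hne
    have h2 : 0 ≤ ℓ (γ v - v) (γ v - v) := by
      have : γ v - v ∈ C ∪ (-C) := Or.inl hmem
      rw [hCunion] at this
      exact this
    linarith
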